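/- Let H₁,…,H_m be N×N complex Hermitian matrices, let 1 ≤ m' < m, set A = ∑_{j=1}^{m'} H_j, B = ∑_{j=m'+1}^{m} H_j and H = A + B, and let t ∈ ℝ. Then for any fixed positive integers α and β, the matrices [ (e^{−iH₁t/(αn)} ⋯ e^{−iH_{m'}t/(αn)})^α · (e^{−iH_{m'+1}t/(βn)} ⋯ e^{−iH_m t/(βn)})^β ]^n converge to e^{−iHt} as n → ∞ over the natural numbers. -/

import Mathlib

section helpers

open NormedSpace
set_option linter.unusedSectionVars false

variable {𝔸 : Type*} [NormedRing 𝔸] [NormedAlgebra ℂ 𝔸] [CompleteSpace 𝔸] [NormOneClass 𝔸]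

theorem my_norm_pow_le (x : 𝔸) (n : ℕ) : ‖x ^ n‖ ≤ ‖x‖ ^ n := by
  rcases Nat.eq_zero_or_pos n with h0 | h0
  · simp [h0]
  · exact norm_pow_le' x h0

theorem my_norm_exp_le (x : 𝔸) : ‖exp x‖ ≤ Real.exp ‖x‖ := by
  rw [exp_eq_tsum ℂ]
  refine (norm_tsum_le_tsum_norm (norm_expSeries_summable' x)).trans ?_
  rw [Real.exp_eq_exp_ℝ, exp_eq_tsum ℝ]
  refine Summable.tsum_le_tsum (fun n => ?_) (norm_expSeries_summable' x)
    (by simpa using norm_expSeries_summable' (𝕂 := ℝ) ‖x‖)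
  simp only [norm_smul, norm_inv, Complex.norm_natCast, smul_eq_mul, Real.norm_natCast]
  have h2 := my_norm_pow_le x n
  have h1 : (0:ℝ) ≤ (↑(Nat.factorial n))⁻¹ := by positivity
  calc (↑(Nat.factorial n))⁻¹ * ‖x ^ n‖ ≤ (↑(Nat.factorial n))⁻¹ * ‖x‖ ^ n := by gcongr
  _ = _ := rfl

theorem real_exp_tsum (r : ℝ) : Real.exp r = ∑' n : ℕ, (↑(Nat.factorial n))⁻¹ * r ^ n := by
  rw [Real.exp_eq_exp_ℝ, exp_eq_tsum ℝ]
  simp [smul_eq_mul]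

theorem my_norm_exp_sub_one_sub_id_le (x : 𝔸) :
    ‖exp x - 1 - x‖ ≤ ‖x‖ ^ 2 * Real.exp ‖x‖ := by
  set f : ℕ → 𝔸 := fun n => ((Nat.factorial n : ℂ))⁻¹ • x ^ n with hf
  have hfs : Summable f := expSeries_summable' (𝕂 := ℂ) x
  have h0 : exp x = ∑' n, f n := by rw [exp_eq_tsum ℂ]
  have h1 : ∑' n, f n = f 0 + ∑' n, f (n + 1) := Summable.tsum_eq_zero_add hfs
  have hfs1 : Summable (fun n => f (n + 1)) := (summable_nat_add_iff 1).mpr hfs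
  have h2 : ∑' n, f (n + 1) = f 1 + ∑' n, f (n + 2) := Summable.tsum_eq_zero_add hfs1
  have hkey : exp x - 1 - x = ∑' n, f (n + 2) := by
    rw [h0, h1, h2]
    have : f 0 = 1 := by simp [hf]
    have h1' : f 1 = x := by simp [hf]
    rw [this, h1']
    abel
  rw [hkey]
  have hfs2 : Summable (fun n => f (n + 2)) := (summable_nat_add_iff 2).mpr hfs
  have hbound : ∀ n : ℕ, ‖f (n + 2)‖ ≤ ‖x‖ ^ 2 * ((↑(Nat.factorial n))⁻¹ * ‖x‖ ^ n) := by
    intro n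
    have hfact : (Nat.factorial n : ℝ) ≤ (Nat.factorial (n + 2) : ℝ) := by
      exact_mod_cast Nat.factorial_le (by omega)
    have hfp : (0:ℝ) < Nat.factorial n := by positivity
    have := my_norm_pow_le x (n + 2)
    simp only [hf, norm_smul, norm_inv, Complex.norm_natCast]
    calc (↑(Nat.factorial (n+2)))⁻¹ * ‖x ^ (n+2)‖
        ≤ (↑(Nat.factorial n))⁻¹ * ‖x‖ ^ (n + 2) := by
          apply mul_le_mul (by gcongr) this (norm_nonneg _) (by positivity)
      _ = ‖x‖ ^ 2 * ((↑(Nat.factorial n))⁻¹ * ‖x‖ ^ n) := by ring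
  have hsum2 : Summable (fun n : ℕ => ‖x‖ ^ 2 * ((↑(Nat.factorial n))⁻¹ * ‖x‖ ^ n)) := by
    apply Summable.mul_left
    simpa [div_eq_inv_mul] using Real.summable_pow_div_factorial ‖x‖
  have hns : Summable (fun n => ‖f (n + 2)‖) :=
    Summable.of_nonneg_of_le (fun _ => norm_nonneg _) hbound hsum2
  calc ‖∑' n, f (n + 2)‖ ≤ ∑' n, ‖f (n + 2)‖ := norm_tsum_le_tsum_norm hns
    _ ≤ ∑' n, ‖x‖ ^ 2 * ((↑(Nat.factorial n))⁻¹ * ‖x‖ ^ n) := Summable.tsum_le_tsum hbound hns hsum2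
    _ = ‖x‖ ^ 2 * Real.exp ‖x‖ := by rw [real_exp_tsum]; exact tsum_mul_left

theorem my_list_sum_norm_le (l : List 𝔸) (r : ℝ) (h : ∀ a ∈ l, ‖a‖ ≤ r) :
    ‖l.sum‖ ≤ l.length * r := by
  induction l with
  | nil => simp
  | cons a l ih =>
    simp only [List.sum_cons, List.length_cons]
    calc ‖a + l.sum‖ ≤ ‖a‖ + ‖l.sum‖ := norm_add_le _ _
      _ ≤ r + l.length * r := add_le_add (h a (by simp)) (ih fun b hb => h b (by simp [hb]))
      _ = (l.length + 1) * r := by ring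
      _ = _ := by push_cast; ring

theorem my_list_prod_exp_norm_le (l : List 𝔸) (r : ℝ) (hr : 0 ≤ r) (h : ∀ a ∈ l, ‖a‖ ≤ r) :
    ‖(l.map (exp)).prod‖ ≤ Real.exp (l.length * r) := by
  induction l with
  | nil => simp
  | cons a l ih =>
    simp only [List.map_cons, List.prod_cons, List.length_cons]
    calc ‖exp a * (l.map (exp)).prod‖ ≤ ‖exp a‖ * ‖(l.map (exp)).prod‖ := norm_mul_le _ _
      _ ≤ Real.exp ‖a‖ * Real.exp (l.length * r) := by
          apply mul_le_mul (my_norm_exp_le a) (ih fun b hb => h b (by simp [hb]))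
            (norm_nonneg _) (Real.exp_nonneg _)
      _ ≤ Real.exp r * Real.exp (l.length * r) := by
          gcongr
          exact h a (by simp)
      _ = Real.exp ((l.length + 1) * r) := by rw [← Real.exp_add]; ring_nf
      _ = _ := by push_cast; ring_nf

theorem my_pow_sub_pow_norm_le (x y : 𝔸) (c : ℝ) (hx : ‖x‖ ≤ c) (hy : ‖y‖ ≤ c) :
    ∀ n : ℕ, ‖x ^ n - y ^ n‖ ≤ n * c ^ (n - 1) * ‖x - y‖ := by
  have hc : 0 ≤ c := le_trans (norm_nonneg x) hx
  intro n
  induction n with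
  | zero => simp
  | succ n ih =>
    have key : x ^ (n + 1) - y ^ (n + 1) = x ^ n * (x - y) + (x ^ n - y ^ n) * y := by
      rw [pow_succ x, pow_succ y, mul_sub, sub_mul]
      abel
    rw [key]
    have hxn : ‖x ^ n‖ ≤ c ^ n := (my_norm_pow_le x n).trans (pow_le_pow_left₀ (norm_nonneg _) hx n)
    calc ‖x ^ n * (x - y) + (x ^ n - y ^ n) * y‖
        ≤ ‖x ^ n * (x - y)‖ + ‖(x ^ n - y ^ n) * y‖ := norm_add_le _ _
      _ ≤ ‖x ^ n‖ * ‖x - y‖ + ‖x ^ n - y ^ n‖ * ‖y‖ := add_le_add (norm_mul_le _ _) (norm_mul_le _ _)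
      _ ≤ c ^ n * ‖x - y‖ + (n * c ^ (n - 1) * ‖x - y‖) * c := by
          apply add_le_add
          · exact mul_le_mul_of_nonneg_right hxn (norm_nonneg _)
          · apply mul_le_mul ih hy (norm_nonneg _) (by positivity)
      _ ≤ (n + 1) * c ^ n * ‖x - y‖ := by
          rcases Nat.eq_zero_or_pos n with h0 | h0
          · subst h0; simp
          · have : c ^ (n - 1) * c = c ^ n := by
              rw [← pow_succ]; congr 1; omega
            have h2 : (n:ℝ) * c ^ (n - 1) * ‖x - y‖ * c = n * c ^ n * ‖x - y‖ := by
              rw [← this]; ring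
            linarith
      _ = _ := by push_cast; ring

theorem my_prod_exp_expansion (L : ℕ) : ∃ C : ℝ, 0 ≤ C ∧ ∀ (l : List 𝔸) (r : ℝ),
    l.length = L → 0 ≤ r → r ≤ 1 → (∀ a ∈ l, ‖a‖ ≤ r) →
    ‖(l.map (exp)).prod - 1 - l.sum‖ ≤ C * r ^ 2 := by
  induction L with
  | zero =>
    refine ⟨0, le_rfl, fun l r hl hr0 hr1 h => ?_⟩
    rw [List.length_eq_zero_iff.mp hl]
    simp
  | succ L ih =>
    obtain ⟨C', hC'0, hC'⟩ := ih
    refine ⟨2 * C' + L + 3 * (1 + L + C'), by positivity, fun l r hl hr0 hr1 h => ?_⟩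
    rcases l with - | ⟨a, l'⟩
    · simp at hl
    simp only [List.length_cons, Nat.succ_inj] at hl
    have hr2 : r ^ 2 ≤ 1 := by nlinarith
    set P := (l'.map (exp)).prod with hPdef
    set s := l'.sum with hsdef
    have ha : ‖a‖ ≤ r := h a (by simp)
    have he : ‖P - 1 - s‖ ≤ C' * r ^ 2 := hC' l' r hl hr0 hr1 (fun b hb => h b (by simp [hb]))
    have hd : ‖exp a - 1 - a‖ ≤ 3 * r ^ 2 := by
      have h1 := my_norm_exp_sub_one_sub_id_le a
      have h2 : Real.exp ‖a‖ ≤ Real.exp 1 := Real.exp_le_exp.mpr (ha.trans hr1)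
      have h3 : Real.exp 1 ≤ 3 := by
        have := Real.exp_one_lt_d9
        linarith
      calc ‖exp a - 1 - a‖ ≤ ‖a‖ ^ 2 * Real.exp ‖a‖ := h1
        _ ≤ r ^ 2 * 3 := by
            apply mul_le_mul _ (h2.trans h3) (Real.exp_nonneg _) (by positivity)
            exact pow_le_pow_left₀ (norm_nonneg _) ha 2
        _ = 3 * r ^ 2 := by ring
    have hs : ‖s‖ ≤ L * r := by
      have := my_list_sum_norm_le l' r (fun b hb => h b (by simp [hb]))
      rwa [hl] at this
    have hP : ‖P‖ ≤ 1 + L + C' := by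
      have hLr : (L:ℝ) * r ≤ L := by
        nlinarith [Nat.cast_nonneg (α := ℝ) L]
      have hCr : C' * r ^ 2 ≤ C' := by nlinarith
      calc ‖P‖ = ‖(1:𝔸) + s + (P - 1 - s)‖ := by congr 1; abel
        _ ≤ ‖(1:𝔸)‖ + ‖s‖ + ‖P - 1 - s‖ := norm_add₃_le
        _ ≤ 1 + L * r + C' * r ^ 2 := by
            rw [norm_one]
            exact add_le_add (add_le_add le_rfl hs) he
        _ ≤ 1 + L + C' := by linarith
    have key : exp a * P - 1 - (a + s)
        = (P - 1 - s) + a * s + a * (P - 1 - s) + (exp a - 1 - a) * P := by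
      noncomm_ring
    simp only [List.map_cons, List.prod_cons, List.sum_cons]
    rw [← hPdef, ← hsdef, key]
    have b1 : ‖a * s‖ ≤ r * (L * r) := (norm_mul_le _ _).trans (mul_le_mul ha hs (norm_nonneg _) hr0)
    have b2 : ‖a * (P - 1 - s)‖ ≤ r * (C' * r ^ 2) :=
      (norm_mul_le _ _).trans (mul_le_mul ha he (norm_nonneg _) hr0)
    have b3 : ‖(exp a - 1 - a) * P‖ ≤ 3 * r ^ 2 * (1 + L + C') :=
      (norm_mul_le _ _).trans (mul_le_mul hd hP (norm_nonneg _) (by positivity))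
    have hCr3 : r * (C' * r ^ 2) ≤ C' * r ^ 2 := by
      nlinarith [mul_nonneg hC'0 (mul_nonneg hr0 hr0)]
    calc ‖(P - 1 - s) + a * s + a * (P - 1 - s) + (exp a - 1 - a) * P‖
        ≤ ‖(P - 1 - s) + a * s + a * (P - 1 - s)‖ + ‖(exp a - 1 - a) * P‖ := norm_add_le _ _
      _ ≤ ‖P - 1 - s‖ + ‖a * s‖ + ‖a * (P - 1 - s)‖ + ‖(exp a - 1 - a) * P‖ := by
            have := norm_add₃_le (a := P - 1 - s) (b := a * s) (c := a * (P - 1 - s))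
            linarith
      _ ≤ C' * r ^ 2 + r * (L * r) + r * (C' * r ^ 2) + 3 * r ^ 2 * (1 + L + C') := by
            exact add_le_add (add_le_add (add_le_add he b1) b2) b3
      _ ≤ (2 * C' + L + 3 * (1 + L + C')) * r ^ 2 := by nlinarith

open Filter Topology in
theorem my_trotter (L : ℕ) (K : ℝ) (hK : 0 < K) (lfun : ℕ → List 𝔸) (S : 𝔸)
    (hSK : ‖S‖ ≤ K)
    (hlen : ∀ n, (lfun n).length = L)
    (hbound : ∀ n : ℕ, 1 ≤ n → ∀ a ∈ lfun n, ‖a‖ ≤ K / n)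
    (hsum : ∀ n : ℕ, 1 ≤ n → (lfun n).sum = ((n : ℂ))⁻¹ • S) :
    Tendsto (fun n => ((lfun n).map (exp)).prod ^ n) atTop (𝓝 (exp S)) := by
  obtain ⟨C, hC0, hC⟩ := my_prod_exp_expansion (𝔸 := 𝔸) L
  set D : ℝ := Real.exp ((L + 1) * K) * ((C + 3) * K ^ 2) with hD
  have hD0 : 0 ≤ D := by positivity
  have key : ∀ n : ℕ, max 1 ⌈K⌉₊ ≤ n →
      ‖((lfun n).map (exp)).prod ^ n - exp S‖ ≤ D / n := by
    intro n hn
    have hn1 : 1 ≤ n := le_trans (le_max_left _ _) hn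
    have hn0 : (0:ℝ) < n := by exact_mod_cast hn1
    set r : ℝ := K / n with hr
    have hr0 : 0 ≤ r := by positivity
    have hr1 : r ≤ 1 := by
      rw [hr, div_le_one hn0]
      calc K ≤ ⌈K⌉₊ := Nat.le_ceil K
        _ ≤ n := by exact_mod_cast le_trans (le_max_right _ _) hn
    set x := ((lfun n).map (exp)).prod with hx
    set s : 𝔸 := ((n : ℂ))⁻¹ • S with hs
    set y := exp s with hy
    have hnC : ((n : ℂ)) ≠ 0 := by exact_mod_cast Nat.cast_ne_zero.mpr (by omega)
    have hyn : y ^ n = exp S := by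
      letI : NormedAlgebra ℚ 𝔸 := NormedAlgebra.restrictScalars ℚ ℂ 𝔸
      rw [hy, ← exp_nsmul, hs, ← Nat.cast_smul_eq_nsmul ℂ, smul_smul,
        mul_inv_cancel₀ hnC, one_smul]
    have hsnorm : ‖s‖ ≤ r := by
      rw [hs, norm_smul, norm_inv, Complex.norm_natCast, hr]
      rw [div_eq_inv_mul]
      gcongr
    have hdiff : ‖x - y‖ ≤ (C + 3) * r ^ 2 := by
      have h1 : ‖x - 1 - (lfun n).sum‖ ≤ C * r ^ 2 :=
        hC (lfun n) r (hlen n) hr0 hr1 (hbound n hn1)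
      have h2 : ‖y - 1 - s‖ ≤ 3 * r ^ 2 := by
        have := my_norm_exp_sub_one_sub_id_le s
        have he3 : Real.exp ‖s‖ ≤ 3 := by
          have := Real.exp_one_lt_d9
          calc Real.exp ‖s‖ ≤ Real.exp 1 := Real.exp_le_exp.mpr (hsnorm.trans hr1)
            _ ≤ 3 := by linarith
        calc ‖y - 1 - s‖ ≤ ‖s‖ ^ 2 * Real.exp ‖s‖ := my_norm_exp_sub_one_sub_id_le s
          _ ≤ r ^ 2 * 3 := mul_le_mul (by
                exact pow_le_pow_left₀ (norm_nonneg _) hsnorm 2) he3 (Real.exp_nonneg _)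
                (by positivity)
          _ = 3 * r ^ 2 := by ring
      calc ‖x - y‖ = ‖(x - 1 - (lfun n).sum) - (y - 1 - s)‖ := by
            rw [hsum n hn1, ← hs]; congr 1; abel
        _ ≤ ‖x - 1 - (lfun n).sum‖ + ‖y - 1 - s‖ := norm_sub_le _ _
        _ ≤ C * r ^ 2 + 3 * r ^ 2 := add_le_add h1 h2
        _ = (C + 3) * r ^ 2 := by ring
    set cb : ℝ := Real.exp ((L + 1) * r) with hcb
    have hcb1 : 1 ≤ cb := Real.one_le_exp (by positivity)
    have hxle : ‖x‖ ≤ cb := by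
      calc ‖x‖ ≤ Real.exp ((lfun n).length * r) :=
            my_list_prod_exp_norm_le (lfun n) r hr0 (hbound n hn1)
        _ ≤ cb := by
            rw [hlen n, hcb]
            apply Real.exp_le_exp.mpr
            nlinarith
    have hyle : ‖y‖ ≤ cb := by
      calc ‖y‖ ≤ Real.exp ‖s‖ := my_norm_exp_le s
        _ ≤ cb := by
            apply Real.exp_le_exp.mpr
            nlinarith [hsnorm]
    have hpow := my_pow_sub_pow_norm_le x y cb hxle hyle n
    have hcbn : cb ^ (n - 1) ≤ Real.exp ((L + 1) * K) := by
      calc cb ^ (n - 1) ≤ cb ^ n := pow_le_pow_right₀ hcb1 (by omega)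
        _ = Real.exp ((L + 1) * r * n) := by
            rw [hcb, ← Real.exp_nat_mul]; ring_nf
        _ ≤ Real.exp ((L + 1) * K) := by
            apply Real.exp_le_exp.mpr
            rw [hr, mul_assoc, div_mul_cancel₀ K (ne_of_gt hn0)]
    calc ‖x ^ n - exp S‖ = ‖x ^ n - y ^ n‖ := by rw [hyn]
      _ ≤ n * cb ^ (n - 1) * ‖x - y‖ := hpow
      _ ≤ n * Real.exp ((L + 1) * K) * ((C + 3) * r ^ 2) := by
          apply mul_le_mul _ hdiff (norm_nonneg _) (by positivity)
          exact mul_le_mul_of_nonneg_left hcbn (by positivity)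
      _ = D / n := by
          rw [hD, hr]
          field_simp
  rw [tendsto_iff_norm_sub_tendsto_zero]
  apply squeeze_zero' (Filter.Eventually.of_forall fun n => norm_nonneg _)
    (Filter.eventually_atTop.mpr ⟨max 1 ⌈K⌉₊, key⟩)
  exact tendsto_const_div_atTop_nhds_zero_nat D

end helpers

open NormedSpace


theorem list_range_map_sum {M : Type*} [AddCommMonoid M] (f : ℕ → M) (k : ℕ) :
    ((List.range k).map f).sum = ∑ j ∈ Finset.range k, f j := by
  induction k with
  | zero => simp
  | succ k ih => rw [List.range_succ, Finset.sum_range_succ, ← ih]; simp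

theorem sum_range_shift {M : Type*} [AddCommMonoid M] (f : ℕ → M) (a k : ℕ) :
    ∑ j ∈ Finset.range k, f (a + j + 1) = ∑ j ∈ Finset.Icc (a + 1) (a + k), f j := by
  induction k with
  | zero => simp
  | succ k ih =>
    rw [Finset.sum_range_succ, ih, show a + (k+1) = (a+k)+1 by ring,
      Finset.sum_Icc_succ_top (by omega), show a + k + 1 = a + (k+1) by ring]

theorem my_sum_split {M : Type*} [AddCommMonoid M] (f : ℕ → M) (m m' : ℕ) (hm' : m' ≤ m) :
    ∑ j ∈ Finset.range m', f (j+1) + ∑ j ∈ Finset.range (m-m'), f (m'+j+1)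
      = ∑ j ∈ Finset.Icc 1 m, f j := by
  have h1 : ∑ j ∈ Finset.range m', f (j+1) = ∑ j ∈ Finset.Icc 1 m', f j := by
    simpa using sum_range_shift f 0 m'
  have h2 := sum_range_shift f m' (m - m')
  rw [Nat.add_sub_cancel' hm'] at h2
  rw [h1, h2]
  rw [← Finset.Ico_add_one_right_eq_Icc, ← Finset.Ico_add_one_right_eq_Icc, ← Finset.Ico_add_one_right_eq_Icc]
  exact Finset.sum_Ico_consecutive f (by omega) (by omega)

/-- The recursed Lie–Trotter product formula: splitting `H = A + B` with
`A = H₁ + ⋯ + H_{m'}` and `B = H_{m'+1} + ⋯ + H_m`, and applying inner repetition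
numbers `α` and `β` within the two groups, the iterated product still converges to
`exp(−iHt)` as `n → ∞`. -/
theorem stmt8 (N : ℕ) (m m' : ℕ) (hm'1 : 1 ≤ m') (hm' : m' < m)
    (H : ℕ → Matrix (Fin N) (Fin N) ℂ)
    (hHerm : ∀ j ∈ Finset.Icc 1 m, (H j).IsHermitian)
    (t : ℝ) (α β : ℕ) (hα : 0 < α) (hβ : 0 < β) :
    Filter.Tendsto
      (fun n : ℕ =>
        ( (((List.range m').map (fun j =>
              NormedSpace.exp (((-(Complex.I * (t:ℂ))) / ((α:ℂ) * (n:ℂ))) • H (j+1)))).prod) ^ α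
          *
          (((List.range (m - m')).map (fun j =>
              NormedSpace.exp (((-(Complex.I * (t:ℂ))) / ((β:ℂ) * (n:ℂ))) • H (m' + j + 1)))).prod) ^ β
        ) ^ n)
      Filter.atTop
      (nhds (NormedSpace.exp ((-(Complex.I * (t:ℂ))) • (∑ j ∈ Finset.Icc 1 m, H j)))) := by
  rcases Nat.eq_zero_or_pos N with hN | hN
  · subst hN
    haveI : Subsingleton (Matrix (Fin 0) (Fin 0) ℂ) := ⟨fun a b => funext fun i => i.elim0⟩
    exact (Filter.tendsto_congr fun n => Subsingleton.elim _ _).mpr tendsto_const_nhds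
  haveI : Nonempty (Fin N) := ⟨⟨0, hN⟩⟩
  letI : NormedRing (Matrix (Fin N) (Fin N) ℂ) := Matrix.linftyOpNormedRing
  letI : NormedAlgebra ℂ (Matrix (Fin N) (Fin N) ℂ) := Matrix.linftyOpNormedAlgebra
  set c : ℂ := -(Complex.I * (t:ℂ)) with hc
  set R : ℝ := ∑ j ∈ Finset.Icc 1 m, ‖H j‖ with hR
  have hR0 : 0 ≤ R := Finset.sum_nonneg fun _ _ => norm_nonneg _
  set K : ℝ := ‖c‖ * R + 1 with hKdef
  have hK : 0 < K := by positivity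
  set S : Matrix (Fin N) (Fin N) ℂ := c • ∑ j ∈ Finset.Icc 1 m, H j with hS
  set l1 : ℕ → List (Matrix (Fin N) (Fin N) ℂ) :=
    fun n => (List.range m').map (fun j => (c / ((α:ℂ) * (n:ℂ))) • H (j+1)) with hl1
  set l2 : ℕ → List (Matrix (Fin N) (Fin N) ℂ) :=
    fun n => (List.range (m - m')).map (fun j => (c / ((β:ℂ) * (n:ℂ))) • H (m'+j+1)) with hl2
  set lfun : ℕ → List (Matrix (Fin N) (Fin N) ℂ) :=
    fun n => (List.replicate α (l1 n)).flatten ++ (List.replicate β (l2 n)).flatten with hlf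
  have hαC : ((α:ℂ)) ≠ 0 := Nat.cast_ne_zero.mpr (by omega)
  have hβC : ((β:ℂ)) ≠ 0 := Nat.cast_ne_zero.mpr (by omega)
  -- the product identity
  have hprod : ∀ n : ℕ,
      (((List.range m').map (fun j => exp ((c / ((α:ℂ) * (n:ℂ))) • H (j+1)))).prod) ^ α
        * (((List.range (m - m')).map (fun j =>
            exp ((c / ((β:ℂ) * (n:ℂ))) • H (m'+j+1)))).prod) ^ β
      = ((lfun n).map (exp)).prod := by
    intro n
    simp [hlf, hl1, hl2, List.map_flatten, List.prod_flatten, List.map_map, Function.comp_def]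
  have hlen : ∀ n : ℕ, (lfun n).length = α * m' + β * (m - m') := by
    intro n
    simp [hlf, hl1, hl2, List.length_flatten, Function.comp_def, mul_comm]
  -- norm bound for single elements
  have hHle : ∀ i ∈ Finset.Icc 1 m, ‖H i‖ ≤ R :=
    fun i hi => Finset.single_le_sum (f := fun j => ‖H j‖) (fun _ _ => norm_nonneg _) hi
  have hnorm : ∀ (γ : ℕ), 1 ≤ γ → ∀ (n : ℕ), 1 ≤ n → ∀ i, i ∈ Finset.Icc 1 m →
      ‖(c / ((γ:ℂ) * (n:ℂ))) • H i‖ ≤ K / n := by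
    intro γ hγ n hn i hi
    have hn0 : (0:ℝ) < n := by exact_mod_cast hn
    have hγ0 : (0:ℝ) < γ := by exact_mod_cast hγ
    have hγ1 : (1:ℝ) ≤ γ := by exact_mod_cast hγ
    rw [norm_smul, norm_div]
    have hden : ‖(γ:ℂ) * (n:ℂ)‖ = (γ:ℝ) * n := by
      rw [norm_mul, Complex.norm_natCast, Complex.norm_natCast]
    rw [hden]
    calc ‖c‖ / ((γ:ℝ) * n) * ‖H i‖ ≤ ‖c‖ / n * R := by
          apply mul_le_mul _ (hHle i hi) (norm_nonneg _) (by positivity)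
          apply div_le_div_of_nonneg_left (norm_nonneg c) hn0 (by nlinarith)
      _ ≤ K / n := by
          rw [hKdef, div_mul_eq_mul_div]
          gcongr
          linarith
  have hbound : ∀ n : ℕ, 1 ≤ n → ∀ a ∈ lfun n, ‖a‖ ≤ K / n := by
    intro n hn a ha
    simp only [hlf, List.mem_append, List.mem_flatten, List.mem_replicate] at ha
    rcases ha with ⟨l, ⟨-, rfl⟩, hal⟩ | ⟨l, ⟨-, rfl⟩, hal⟩
    · simp only [hl1, List.mem_map, List.mem_range] at hal
      obtain ⟨j, hj, rfl⟩ := hal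
      exact hnorm α hα n hn (j+1) (Finset.mem_Icc.mpr (by omega))
    · simp only [hl2, List.mem_map, List.mem_range] at hal
      obtain ⟨j, hj, rfl⟩ := hal
      exact hnorm β hβ n hn (m'+j+1) (Finset.mem_Icc.mpr (by omega))
  have hsum : ∀ n : ℕ, 1 ≤ n → (lfun n).sum = ((n:ℂ))⁻¹ • S := by
    intro n hn
    have hnC : ((n:ℂ)) ≠ 0 := Nat.cast_ne_zero.mpr (by omega)
    have hsum1 : (l1 n).sum = (c / ((α:ℂ) * n)) • ∑ j ∈ Finset.range m', H (j+1) := by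
      rw [hl1]
      rw [list_range_map_sum (fun j => (c / ((α:ℂ) * (n:ℂ))) • H (j+1)) m', ← Finset.smul_sum]
    have hsum2 : (l2 n).sum = (c / ((β:ℂ) * n)) • ∑ j ∈ Finset.range (m-m'), H (m'+j+1) := by
      rw [hl2]
      rw [list_range_map_sum (fun j => (c / ((β:ℂ) * (n:ℂ))) • H (m'+j+1)) (m-m'), ← Finset.smul_sum]
    have : (lfun n).sum = α • (l1 n).sum + β • (l2 n).sum := by
      simp [hlf, List.sum_flatten, Function.comp_def]
    rw [this, hsum1, hsum2, ← Nat.cast_smul_eq_nsmul ℂ, ← Nat.cast_smul_eq_nsmul ℂ,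
      smul_smul, smul_smul]
    have e1 : (α:ℂ) * (c / ((α:ℂ) * n)) = (n:ℂ)⁻¹ * c := by field_simp
    have e2 : (β:ℂ) * (c / ((β:ℂ) * n)) = (n:ℂ)⁻¹ * c := by field_simp
    rw [e1, e2, ← smul_add, hS, smul_smul]
    congr 1
    exact my_sum_split H m m' hm'.le
  have hSK : ‖S‖ ≤ K := by
    rw [hS, norm_smul]
    have : ‖∑ j ∈ Finset.Icc 1 m, H j‖ ≤ R := norm_sum_le _ _
    calc ‖c‖ * ‖∑ j ∈ Finset.Icc 1 m, H j‖ ≤ ‖c‖ * R :=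
          mul_le_mul_of_nonneg_left this (norm_nonneg _)
      _ ≤ K := by rw [hKdef]; linarith
  have := my_trotter (α * m' + β * (m - m')) K hK lfun S hSK hlen hbound hsum
  refine (Filter.tendsto_congr fun n => ?_).mpr this
  rw [hprod n]
  rfl
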